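/- arXiv:2102.06577 — 8 statements merged into one kernel-verified Lean document; each statement's English description precedes it below -/
import Mathlib

section
/- Let R be a commutative ring, G a monoid, and A a left G-act. The R-linear map φ : R[G∫A] → R[G]#A defined on basis elements by e_{(a,g)} ↦ e_g p_a is an isomorphism of non-unital rings. -/
namespace Persist3

variable (R : Type) [CommRing R] (G : Type) [Monoid G] (A : Type) [MulAction G A]

open scoped Classical in
/-- Multiplication on the category algebra `R[G∫A]`, the free `R`-module on the morphisms
`(a, g)` of the action category `G∫A`:
`e_{(b,h)} · e_{(a,g)} = e_{(a, h*g)}` if `b = g • a`, and `0` otherwise. -/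
noncomputable def catAlgMul (x y : (A × G) →₀ R) : (A × G) →₀ R :=
  y.sum fun p r =>
    x.sum fun q t =>
      if q.1 = p.2 • p.1 then Finsupp.single (p.1, q.2 * p.2) (t * r) else 0

/-- Multiplication on the smash product `R[G] # A`, the free `R[G]`-module on the basis
`{p_a : a ∈ A}`: `(s_g p_a)(t_h p_b) = (s_g t_h) p_b` if `h • b = a`, and `0` otherwise. -/
noncomputable def smashMul (x y : A →₀ MonoidAlgebra R G) : A →₀ MonoidAlgebra R G :=
  y.sum fun b t =>
    Finsupp.single b (Finsupp.sum t.coeff fun h r => x (h • b) * MonoidAlgebra.single h r)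

/-- The `R`-linear map `φ : R[G∫A] → R[G] # A` given on basis elements by
`e_{(a,g)} ↦ e_g p_a`. -/
noncomputable def phi : ((A × G) →₀ R) →ₗ[R] (A →₀ MonoidAlgebra R G) :=
  Finsupp.lsum R fun p =>
    (Finsupp.lsingle p.1).comp (MonoidAlgebra.lsingle (R := R) (S := R) p.2)

set_option linter.unusedSectionVars false

noncomputable def psi : (A →₀ MonoidAlgebra R G) →ₗ[R] ((A × G) →₀ R) :=
  Finsupp.lsum R fun a => (Finsupp.lsum R fun g => Finsupp.lsingle (a, g)) ∘ₗ
    (MonoidAlgebra.coeffLinearEquiv R).toLinearMap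

theorem phi_single (a : A) (g : G) (r : R) :
    phi R G A (Finsupp.single (a, g) r) = Finsupp.single a (MonoidAlgebra.single g r) := by
  simp [phi]

theorem psi_single (a : A) (g : G) (r : R) :
    psi R G A (Finsupp.single a (MonoidAlgebra.single g r)) = Finsupp.single (a, g) r := by
  unfold psi
  rw [Finsupp.lsum_single, LinearMap.comp_apply]
  have : (MonoidAlgebra.coeffLinearEquiv R).toLinearMap (MonoidAlgebra.single g r) =
    Finsupp.single g r := rfl
  rw [this, Finsupp.lsum_single, Finsupp.lsingle_apply]

theorem phi_bij : Function.Bijective (phi R G A) := by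
  have h1 : (psi R G A).comp (phi R G A) = LinearMap.id := by
    apply Finsupp.lhom_ext
    rintro ⟨a, g⟩ r
    simp only [LinearMap.comp_apply, LinearMap.id_apply]
    rw [phi_single]; erw [psi_single]
  have h2 : (phi R G A).comp (psi R G A) = LinearMap.id := by
    apply Finsupp.lhom_ext'
    intro a
    apply MonoidAlgebra.lhom_ext'
    intro g
    apply LinearMap.ext_ring
    simp only [LinearMap.comp_apply, Finsupp.lsingle_apply, MonoidAlgebra.lsingle_apply,
      LinearMap.id_apply]
    erw [psi_single]; rw [phi_single]
  constructor
  · intro x y h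
    have := congrArg (psi R G A) h
    rw [← LinearMap.comp_apply, ← LinearMap.comp_apply, h1, LinearMap.id_apply,
      LinearMap.id_apply] at this
    exact this
  · intro y
    refine ⟨psi R G A y, ?_⟩
    rw [← LinearMap.comp_apply, h2, LinearMap.id_apply]

theorem catAlgMul_zero_left (y : (A × G) →₀ R) : catAlgMul R G A 0 y = 0 := by
  simp [catAlgMul]

theorem catAlgMul_zero_right (x : (A × G) →₀ R) : catAlgMul R G A x 0 = 0 := by
  simp [catAlgMul]

theorem catAlgMul_add_left (x x' y : (A × G) →₀ R) :
    catAlgMul R G A (x + x') y = catAlgMul R G A x y + catAlgMul R G A x' y := by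
  classical
  unfold catAlgMul
  rw [← Finsupp.sum_add]
  apply Finsupp.sum_congr
  intro p _
  rw [Finsupp.sum_add_index]
  · intro q _; split <;> simp
  · intro q _ t t'; split <;> simp [add_mul, Finsupp.single_add]

theorem catAlgMul_add_right (x y y' : (A × G) →₀ R) :
    catAlgMul R G A x (y + y') = catAlgMul R G A x y + catAlgMul R G A x y' := by
  classical
  unfold catAlgMul
  rw [Finsupp.sum_add_index]
  · intro p _
    apply Finset.sum_eq_zero
    intro q _; dsimp only; split <;> simp
  · intro p _ r r'
    rw [← Finsupp.sum_add]
    apply Finsupp.sum_congr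
    intro q _
    split <;> simp [mul_add, Finsupp.single_add]

theorem smashMul_zero_left (y : A →₀ MonoidAlgebra R G) : smashMul R G A 0 y = 0 := by
  unfold smashMul
  apply Finset.sum_eq_zero
  intro b _
  dsimp only
  have : (Finsupp.sum (y b).coeff fun h r => (0 : A →₀ MonoidAlgebra R G) (h • b) * MonoidAlgebra.single h r) = 0 := by
    apply Finset.sum_eq_zero; intro h _; simp
  rw [this, Finsupp.single_zero]

theorem smashMul_add_left (x x' y : A →₀ MonoidAlgebra R G) :
    smashMul R G A (x + x') y = smashMul R G A x y + smashMul R G A x' y := by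
  classical
  unfold smashMul
  rw [← Finsupp.sum_add]
  apply Finsupp.sum_congr
  intro b _
  rw [← Finsupp.single_add, ← Finsupp.sum_add]
  congr 1
  apply Finsupp.sum_congr
  intro h _
  simp [add_mul]

theorem smashMul_add_right (x y y' : A →₀ MonoidAlgebra R G) :
    smashMul R G A x (y + y') = smashMul R G A x y + smashMul R G A x y' := by
  classical
  unfold smashMul
  rw [Finsupp.sum_add_index]
  · intro b _; simp
  · intro b _ t t'
    rw [← Finsupp.single_add]
    congr 1
    rw [MonoidAlgebra.coeff_add, Finsupp.sum_add_index]
    · intro h _; simp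
    · intro h _ r r'
      rw [MonoidAlgebra.single_add, mul_add]


theorem key_single (q : A × G) (t : R) (p : A × G) (r : R) :
    phi R G A (catAlgMul R G A (Finsupp.single q t) (Finsupp.single p r)) =
      smashMul R G A (phi R G A (Finsupp.single q t)) (phi R G A (Finsupp.single p r)) := by
  classical
  obtain ⟨a1, g1⟩ := q
  obtain ⟨a2, g2⟩ := p
  rw [phi_single, phi_single]
  unfold catAlgMul smashMul
  rw [Finsupp.sum_single_index (by apply Finset.sum_eq_zero; intro q _; dsimp only; split <;> simp)]
  rw [Finsupp.sum_single_index (by simp)]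
  rw [Finsupp.sum_single_index (by rw [MonoidAlgebra.coeff_zero, Finsupp.sum_zero_index, Finsupp.single_zero])]
  erw [Finsupp.sum_single_index (by simp)]
  dsimp only
  erw [Finsupp.single_apply]
  by_cases hc : a1 = g2 • a2
  · rw [if_pos hc, if_pos hc, phi_single]
    congr 1
    erw [MonoidAlgebra.single_mul_single]
  · rw [if_neg hc, if_neg hc, map_zero, zero_mul, Finsupp.single_zero]


theorem smashMul_zero_right (x : A →₀ MonoidAlgebra R G) : smashMul R G A x 0 = 0 := by
  simp [smashMul]

theorem key_left (p : A × G) (r : R) (x : (A × G) →₀ R) :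
    phi R G A (catAlgMul R G A x (Finsupp.single p r)) =
      smashMul R G A (phi R G A x) (phi R G A (Finsupp.single p r)) := by
  induction x using Finsupp.induction with
  | zero => rw [catAlgMul_zero_left, map_zero, smashMul_zero_left]
  | single_add q t x _ _ ih =>
    rw [catAlgMul_add_left, map_add, map_add, smashMul_add_left, ih, key_single]


/-- The `R`-linear map `φ : R[G∫A] → R[G] # A`, `e_{(a,g)} ↦ e_g p_a`,
is an isomorphism of non-unital rings: it is bijective, additive (indeed `R`-linear) and
multiplicative. -/
theorem statement3 :
    (∀ (a : A) (g : G),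
        phi R G A (Finsupp.single (a, g) 1) =
          Finsupp.single a (MonoidAlgebra.single g 1)) ∧
    Function.Bijective (phi R G A) ∧
    (∀ x y : (A × G) →₀ R,
        phi R G A (catAlgMul R G A x y) = smashMul R G A (phi R G A x) (phi R G A y)) := by
  refine ⟨fun a g => by rw [phi_single], phi_bij R G A, fun x y => ?_⟩
  induction y using Finsupp.induction with
  | zero => rw [catAlgMul_zero_right, map_zero, smashMul_zero_right]
  | single_add p r y _ _ ih =>
    rw [catAlgMul_add_right, map_add, map_add, smashMul_add_right, ih, key_left]

end Persist3
end

section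
/- Let R be a commutative ring, C a poset, M an RC-module, and S ⊆ C a subset. Then (1) M is S-generated if and only if B_S(M) ⊆ S, and (2) M is S-presented if and only if B_S(M) ∪ D_S(M) ⊆ S. -/
open CategoryTheory Limits

namespace Persist

variable (R : Type) [CommRing R] (C : Type) [PartialOrder C]

/-- The natural map `colim_{d ∈ S, d < c} M(d) → M(c)`. -/
noncomputable def lambdaMap (M : C ⥤ ModuleCat.{0} R) (S : Set C) (c : C) :
    colimit (ObjectProperty.ι (fun d : C => d ∈ S ∧ d < c) ⋙ M) ⟶ M.obj c :=
  colimit.desc (ObjectProperty.ι (fun d : C => d ∈ S ∧ d < c) ⋙ M)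
    { pt := M.obj c
      ι :=
        { app := fun d => M.map (homOfLE d.property.2.le)
          naturality := fun d d' f => by
            dsimp
            rw [Category.comp_id, ← M.map_comp]
            exact congrArg M.map (Subsingleton.elim _ _) } }

/-- The natural map `colim_{d ∈ S, d ≤ c} M(d) → M(c)`, i.e. the component at `c` of the
counit `ind_S res_S M ⟶ M`. -/
noncomputable def muMap (M : C ⥤ ModuleCat.{0} R) (S : Set C) (c : C) :
    colimit (ObjectProperty.ι (fun d : C => d ∈ S ∧ d ≤ c) ⋙ M) ⟶ M.obj c :=
  colimit.desc (ObjectProperty.ι (fun d : C => d ∈ S ∧ d ≤ c) ⋙ M)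
    { pt := M.obj c
      ι :=
        { app := fun d => M.map (homOfLE d.property.2)
          naturality := fun d d' f => by
            dsimp
            rw [Category.comp_id, ← M.map_comp]
            exact congrArg M.map (Subsingleton.elim _ _) } }

/-- `M` is `S`-generated: the counit `ind_S res_S M ⟶ M` is an epimorphism
(pointwise criterion). -/
def SGenerated (M : C ⥤ ModuleCat.{0} R) (S : Set C) : Prop :=
  ∀ c : C, Epi (muMap R C M S c)

/-- `M` is `S`-presented: the counit `ind_S res_S M ⟶ M` is an isomorphism
(pointwise criterion). -/
def SPresented (M : C ⥤ ModuleCat.{0} R) (S : Set C) : Prop :=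
  ∀ c : C, IsIso (muMap R C M S c)

/-- The set of births of `M` relative to `S`. -/
def births (M : C ⥤ ModuleCat.{0} R) (S : Set C) : Set C :=
  {c : C | ¬ Epi (lambdaMap R C M S c)}

/-- The set of deaths of `M` relative to `S`. -/
def deaths (M : C ⥤ ModuleCat.{0} R) (S : Set C) : Set C :=
  {c : C | ¬ Mono (lambdaMap R C M S c)}

/-- The `S`-splitting of `M` at `c`: the cokernel of `λ_{M,c}`. -/
noncomputable def splitObj (M : C ⥤ ModuleCat.{0} R) (S : Set C) (c : C) : ModuleCat.{0} R :=
  cokernel (lambdaMap R C M S c)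

/-- Functoriality of the `S`-splitting at `c`. -/
noncomputable def splitMap {L M : C ⥤ ModuleCat.{0} R} (f : L ⟶ M) (S : Set C) (c : C) :
    splitObj R C L S c ⟶ splitObj R C M S c :=
  cokernel.map (lambdaMap R C L S c) (lambdaMap R C M S c)
    (colimMap (Functor.whiskerLeft (ObjectProperty.ι (fun d : C => d ∈ S ∧ d < c)) f))
    (f.app c)
    (by
      apply colimit.hom_ext
      intro d
      simp [lambdaMap, f.naturality])

/-- The support of `M`. -/
def supp (M : C ⥤ ModuleCat.{0} R) : Set C :=
  {c : C | ¬ IsZero (M.obj c)}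

/-- A subset of a poset is Artinian if `<` is well-founded on it (no infinite strictly
descending chains). -/
def ArtinianSubset (S : Set C) : Prop :=
  S.WellFoundedOn (· < ·)


section Aux

/-- Generic desc map for a downward predicate. -/
noncomputable def descMap (M : C ⥤ ModuleCat.{0} R) (P : C → Prop) (c : C)
    (hc : ∀ d, P d → d ≤ c) :
    colimit (ObjectProperty.ι P ⋙ M) ⟶ M.obj c :=
  colimit.desc (ObjectProperty.ι P ⋙ M)
    { pt := M.obj c
      ι :=
        { app := fun d => M.map (homOfLE (hc d.obj d.property))
          naturality := fun d d' f => by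
            dsimp
            rw [Category.comp_id, ← M.map_comp]
            exact congrArg M.map (Subsingleton.elim _ _) } }

lemma muMap_eq_descMap (M : C ⥤ ModuleCat.{0} R) (S : Set C) (c : C) :
    muMap R C M S c = descMap R C M (fun d : C => d ∈ S ∧ d ≤ c) c (fun _ hd => hd.2) := rfl

lemma lambdaMap_eq_descMap (M : C ⥤ ModuleCat.{0} R) (S : Set C) (c : C) :
    lambdaMap R C M S c = descMap R C M (fun d : C => d ∈ S ∧ d < c) c (fun _ hd => hd.2.le) :=
  rfl

lemma descMap_epi_congr (M : C ⥤ ModuleCat.{0} R) (P Q : C → Prop) (h : P = Q) (c : C)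
    (hcP : ∀ d, P d → d ≤ c) (hcQ : ∀ d, Q d → d ≤ c) :
    Epi (descMap R C M P c hcP) ↔ Epi (descMap R C M Q c hcQ) := by
  subst h; exact Iff.rfl

lemma descMap_isIso_congr (M : C ⥤ ModuleCat.{0} R) (P Q : C → Prop) (h : P = Q) (c : C)
    (hcP : ∀ d, P d → d ≤ c) (hcQ : ∀ d, Q d → d ≤ c) :
    IsIso (descMap R C M P c hcP) ↔ IsIso (descMap R C M Q c hcQ) := by
  subst h; exact Iff.rfl

lemma descMap_mono_congr (M : C ⥤ ModuleCat.{0} R) (P Q : C → Prop) (h : P = Q) (c : C)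
    (hcP : ∀ d, P d → d ≤ c) (hcQ : ∀ d, Q d → d ≤ c) :
    Mono (descMap R C M P c hcP) ↔ Mono (descMap R C M Q c hcQ) := by
  subst h; exact Iff.rfl

lemma pred_eq_of_not_mem (S : Set C) (c : C) (hc : c ∉ S) :
    (fun d : C => d ∈ S ∧ d ≤ c) = (fun d : C => d ∈ S ∧ d < c) := by
  funext d
  apply propext
  constructor
  · rintro ⟨h1, h2⟩
    exact ⟨h1, lt_of_le_of_ne h2 (fun e => hc (e ▸ h1))⟩
  · rintro ⟨h1, h2⟩
    exact ⟨h1, h2.le⟩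

lemma muMap_isIso_of_mem (M : C ⥤ ModuleCat.{0} R) (S : Set C) (c : C) (hc : c ∈ S) :
    IsIso (muMap R C M S c) := by
  let P : C → Prop := fun d : C => d ∈ S ∧ d ≤ c
  let T : ObjectProperty.FullSubcategory P := ⟨c, hc, le_refl c⟩
  let t : Cocone (ObjectProperty.ι P ⋙ M) :=
    { pt := M.obj c
      ι :=
        { app := fun d => M.map (homOfLE d.property.2)
          naturality := fun d d' f => by
            dsimp
            rw [Category.comp_id, ← M.map_comp]
            exact congrArg M.map (Subsingleton.elim _ _) } }
  have ht : IsColimit t :=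
    { desc := fun s => s.ι.app T
      fac := fun s d => by
        have h := s.ι.naturality (show d ⟶ T from ObjectProperty.homMk (homOfLE d.property.2))
        simpa using h
      uniq := fun s m hm => by
        have h := hm T
        have h2 : t.ι.app T = 𝟙 (M.obj c) := by
          show M.map (homOfLE (le_refl c)) = _
          rw [show homOfLE (le_refl c) = 𝟙 c from rfl, M.map_id]
        rw [h2] at h
        exact (Category.id_comp m).symm.trans h }
  have : muMap R C M S c = (colimit.isoColimitCocone ⟨t, ht⟩).hom := rfl
  rw [this]
  infer_instance

lemma muMap_epi_iff (M : C ⥤ ModuleCat.{0} R) (S : Set C) (c : C) (hc : c ∉ S) :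
    Epi (muMap R C M S c) ↔ Epi (lambdaMap R C M S c) := by
  rw [muMap_eq_descMap, lambdaMap_eq_descMap]
  exact descMap_epi_congr R C M _ _ (pred_eq_of_not_mem C S c hc) c _ _

lemma muMap_isIso_iff (M : C ⥤ ModuleCat.{0} R) (S : Set C) (c : C) (hc : c ∉ S) :
    IsIso (muMap R C M S c) ↔ IsIso (lambdaMap R C M S c) := by
  rw [muMap_eq_descMap, lambdaMap_eq_descMap]
  exact descMap_isIso_congr R C M _ _ (pred_eq_of_not_mem C S c hc) c _ _

end Aux

/-- `M` is `S`-generated iff `B_S(M) ⊆ S`, and `M` is `S`-presented iff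
`B_S(M) ∪ D_S(M) ⊆ S`. -/
theorem statement8 (M : C ⥤ ModuleCat.{0} R) (S : Set C) :
    (SGenerated R C M S ↔ births R C M S ⊆ S) ∧
    (SPresented R C M S ↔ births R C M S ∪ deaths R C M S ⊆ S) := by
  constructor
  · constructor
    · intro hgen c hcb
      by_contra hcS
      exact hcb ((muMap_epi_iff R C M S c hcS).mp (hgen c))
    · intro hsub c
      by_cases hcS : c ∈ S
      · have := muMap_isIso_of_mem R C M S c hcS
        infer_instance
      · rw [muMap_epi_iff R C M S c hcS]
        by_contra h
        exact hcS (hsub h)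
  · constructor
    · intro hpres c hcbd
      by_contra hcS
      have hiso := (muMap_isIso_iff R C M S c hcS).mp (hpres c)
      cases hcbd with
      | inl h => exact h inferInstance
      | inr h => exact h inferInstance
    · intro hsub c
      by_cases hcS : c ∈ S
      · exact muMap_isIso_of_mem R C M S c hcS
      · rw [muMap_isIso_iff R C M S c hcS]
        have hepi : Epi (lambdaMap R C M S c) := by
          by_contra h
          exact hcS (hsub (Or.inl h))
        have hmono : Mono (lambdaMap R C M S c) := by
          by_contra h
          exact hcS (hsub (Or.inr h))
        exact isIso_of_mono_of_epi _


end Persist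
end

section
/- Let R be a commutative ring, C a poset, S ⊆ C a subset, and M an S-generated RC-module. Then B_C(M) = B_S(M). -/
open CategoryTheory Limits

namespace Persist

variable (R : Type) [CommRing R] (C : Type) [PartialOrder C]


/-- Range of a morphism in `ModuleCat`. -/
def rng {A B : ModuleCat.{0} R} (f : A ⟶ B) : Submodule R B :=
  LinearMap.range f.hom

lemma rng_comp {A B D : ModuleCat.{0} R} (f : A ⟶ B) (g : B ⟶ D) :
    rng R (f ≫ g) = Submodule.map g.hom (rng R f) :=
  LinearMap.range_comp _ _

lemma epi_iff_rng {A B : ModuleCat.{0} R} (f : A ⟶ B) : Epi f ↔ rng R f = ⊤ :=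
  ModuleCat.epi_iff_range_eq_top f

lemma rng_eq_map_top {A B : ModuleCat.{0} R} (f : A ⟶ B) :
    rng R f = Submodule.map f.hom ⊤ :=
  (Submodule.map_top _).symm

lemma iSup_rng_colimit_ι {J : Type} [SmallCategory J] (F : J ⥤ ModuleCat.{0} R) :
    ⨆ j, rng R (colimit.ι F j) = ⊤ := by
  set N : Submodule R (colimit F : ModuleCat.{0} R) := ⨆ j, rng R (colimit.ι F j) with hN
  let co : Cocone F :=
    { pt := ModuleCat.of R N
      ι :=
        { app := fun j => ModuleCat.ofHom (LinearMap.codRestrict N (colimit.ι F j).hom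
            (fun x => le_iSup (fun j => rng R (colimit.ι F j)) j
              (LinearMap.mem_range_self _ x)))
          naturality := fun i j f => by
            ext x
            apply Subtype.ext
            exact LinearMap.congr_fun (congrArg ModuleCat.Hom.hom (colimit.w F f)) x } }
  have h : colimit.desc F co ≫ ModuleCat.ofHom N.subtype = 𝟙 (colimit F) := by
    apply colimit.hom_ext
    intro j
    rw [colimit.ι_desc_assoc]
    simp only [Category.comp_id]
    rfl
  have hsurj : Function.Surjective N.subtype := by
    intro x
    exact ⟨(colimit.desc F co).hom x, LinearMap.congr_fun (congrArg ModuleCat.Hom.hom h) x⟩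
  rw [← Submodule.range_subtype N]
  exact LinearMap.range_eq_top.2 hsurj

lemma rng_colimit_desc {J : Type} [SmallCategory J] (F : J ⥤ ModuleCat.{0} R)
    (co : Cocone F) :
    rng R (colimit.desc F co) = ⨆ j, rng R (co.ι.app j) := by
  have h0 : rng R (colimit.desc F co)
      = Submodule.map (colimit.desc F co).hom
          (⊤ : Submodule R (colimit F : ModuleCat.{0} R)) :=
    (Submodule.map_top _).symm
  rw [h0, ← iSup_rng_colimit_ι R F, Submodule.map_iSup]
  congr 1
  funext j
  rw [← rng_comp]
  congr 1
  exact colimit.ι_desc co j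

/-- If `M` is `S`-generated then `B_C(M) = B_S(M)`. -/
theorem statement9 (M : C ⥤ ModuleCat.{0} R) (S : Set C) (hM : SGenerated R C M S) :
    births R C M Set.univ = births R C M S := by
  have hlam : ∀ (T : Set C) (c : C),
      rng R (lambdaMap R C M T c) =
        ⨆ d : ObjectProperty.FullSubcategory (fun d : C => d ∈ T ∧ d < c),
          rng R (M.map (homOfLE d.property.2.le)) :=
    fun T c => rng_colimit_desc R _ _
  have hmu : ∀ d : C,
      (⨆ e : ObjectProperty.FullSubcategory (fun e : C => e ∈ S ∧ e ≤ d),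
        rng R (M.map (homOfLE e.property.2))) = ⊤ := by
    intro d
    have h1 : rng R (muMap R C M S d) =
        ⨆ e : ObjectProperty.FullSubcategory (fun e : C => e ∈ S ∧ e ≤ d),
          rng R (M.map (homOfLE e.property.2)) :=
      rng_colimit_desc R _ _
    exact h1.symm.trans ((epi_iff_rng R _).1 (hM d))
  ext c
  simp only [births, Set.mem_setOf_eq]
  rw [not_iff_not, epi_iff_rng, epi_iff_rng, hlam, hlam]
  constructor
  · intro htop
    rw [eq_top_iff, ← htop]
    apply iSup_le
    intro d
    calc rng R (M.map (homOfLE d.property.2.le))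
        = Submodule.map ((M.map (homOfLE d.property.2.le)).hom :
            M.obj d.obj →ₗ[R] M.obj c) ⊤ := rng_eq_map_top R _
      _ = Submodule.map ((M.map (homOfLE d.property.2.le)).hom :
            M.obj d.obj →ₗ[R] M.obj c)
            (⨆ e : ObjectProperty.FullSubcategory (fun e : C => e ∈ S ∧ e ≤ d.obj),
              rng R (M.map (homOfLE e.property.2))) := by rw [hmu d.obj]
      _ = ⨆ e : ObjectProperty.FullSubcategory (fun e : C => e ∈ S ∧ e ≤ d.obj),
            Submodule.map ((M.map (homOfLE d.property.2.le)).hom :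
              M.obj d.obj →ₗ[R] M.obj c)
              (rng R (M.map (homOfLE e.property.2))) := Submodule.map_iSup _ _
      _ ≤ ⨆ e : ObjectProperty.FullSubcategory (fun e : C => e ∈ S ∧ e < c),
            rng R (M.map (homOfLE e.property.2.le)) := by
          apply iSup_le
          intro e
          have heq : Submodule.map ((M.map (homOfLE d.property.2.le)).hom :
                M.obj d.obj →ₗ[R] M.obj c)
                (rng R (M.map (homOfLE e.property.2)))
              = rng R (M.map (homOfLE (e.property.2.trans d.property.2.le))) := by
            rw [← rng_comp, ← M.map_comp]
            exact congrArg (fun f => rng R (M.map f)) (Subsingleton.elim _ _)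
          rw [heq]
          exact le_iSup_of_le
            ⟨e.obj, e.property.1, lt_of_le_of_lt e.property.2 d.property.2⟩
            (le_of_eq rfl)
  · intro htop
    rw [eq_top_iff, ← htop]
    apply iSup_le
    intro d
    exact le_iSup_of_le ⟨d.obj, trivial, d.property.2⟩ (le_of_eq rfl)


end Persist
end

section
/- Let R be a commutative ring, C a poset, M an RC-module, and S ⊆ C a subset. If supp(M) ∩ S has a minimal element c, then S_{S,c}M ≠ 0 (a Nakayama-type lemma). -/
open CategoryTheory Limits

namespace Persist

variable (R : Type) [CommRing R] (C : Type) [PartialOrder C]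

/-- (Nakayama-type lemma) If `supp(M) ∩ S` has a minimal element `c`, then
`S_{S,c} M ≠ 0`. -/
theorem statement10 (M : C ⥤ ModuleCat.{0} R) (S : Set C) (c : C)
    (hc : c ∈ supp R C M ∩ S) (hmin : ∀ d ∈ supp R C M ∩ S, ¬ d < c) :
    ¬ IsZero (splitObj R C M S c) := by
  have hlam : lambdaMap R C M S c = 0 := by
    apply colimit.hom_ext
    intro d
    have hdz : IsZero (M.obj d.obj) := by
      by_contra hd
      exact hmin d.obj ⟨hd, d.property.1⟩ d.property.2
    rw [comp_zero]
    exact hdz.eq_zero_of_src _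
  intro h
  apply hc.1
  exact h.of_iso (cokernelZeroIsoTarget.symm ≪≫ (cokernelIsoOfEq hlam).symm)

end Persist
end

section
/- Let R be a commutative ring, C a poset, S ⊆ C an Artinian subset, and f : N → M an epimorphism of S-generated RC-modules. If (Ker f)(c) ⊆ Im(λ_{N,c}) for all c ∈ C, then f is a minimal epimorphism. Conversely, if f is minimal and S_{S,c}M is a projective R-module for every c ∈ S, then (Ker f)(c) ⊆ Im(λ_{N,c}) for all c ∈ C. -/
open CategoryTheory Limits

namespace Persist

variable (R : Type) [CommRing R] (C : Type) [PartialOrder C]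

/-- An epimorphism `f : N ⟶ M` is minimal if for every `g : L ⟶ N`, `g ≫ f` is an
epimorphism iff `g` is. -/
def IsMinimalEpi {N M : C ⥤ ModuleCat.{0} R} (f : N ⟶ M) : Prop :=
  ∀ (L : C ⥤ ModuleCat.{0} R) (g : L ⟶ N), Epi (g ≫ f) ↔ Epi g

section Aux
variable {R C}

lemma colimit_iSup_range {J : Type} [SmallCategory J] (F : J ⥤ ModuleCat.{0} R) :
    (⨆ j : J, LinearMap.range (colimit.ι F j).hom) = ⊤ := by
  set T := ⨆ j : J, LinearMap.range (colimit.ι F j).hom with hT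
  have h0 : (ModuleCat.ofHom T.mkQ : (colimit F : ModuleCat.{0} R) ⟶ ModuleCat.of R ((colimit F : ModuleCat.{0} R) ⧸ T)) = 0 := by
    apply colimit.hom_ext
    intro j
    ext x
    simp only [ModuleCat.hom_comp, ModuleCat.hom_ofHom, LinearMap.comp_apply, Limits.comp_zero,
      ModuleCat.hom_zero, LinearMap.zero_apply, Submodule.mkQ_apply]
    exact (Submodule.Quotient.mk_eq_zero T).mpr (le_iSup (fun j => LinearMap.range (colimit.ι F j).hom) j ⟨x, rfl⟩)
  have h2 := congrArg (fun φ => LinearMap.ker φ.hom) h0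
  simp only [ModuleCat.hom_ofHom, ModuleCat.hom_zero] at h2
  rw [Submodule.ker_mkQ] at h2
  exact h2.trans LinearMap.ker_zero

lemma range_desc {J : Type} [SmallCategory J] (F : J ⥤ ModuleCat.{0} R) (cc : Cocone F) :
    LinearMap.range (colimit.desc F cc).hom = ⨆ j : J, LinearMap.range (show F.obj j ⟶ cc.pt from cc.ι.app j).hom := by
  have h : LinearMap.range (colimit.desc F cc).hom
      = Submodule.map (colimit.desc F cc).hom ⊤ := (Submodule.map_top _).symm
  rw [h, ← colimit_iSup_range F, Submodule.map_iSup]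
  refine iSup_congr fun j => ?_
  rw [← LinearMap.range_comp]
  congr 1
  exact congrArg ModuleCat.Hom.hom (colimit.ι_desc cc j)

lemma range_lambdaMap (M : C ⥤ ModuleCat.{0} R) (S : Set C) (c : C) :
    LinearMap.range (lambdaMap R C M S c).hom
      = ⨆ d : ObjectProperty.FullSubcategory (fun d : C => d ∈ S ∧ d < c),
          LinearMap.range (M.map (homOfLE d.property.2.le)).hom :=
  range_desc _ _

lemma range_muMap (M : C ⥤ ModuleCat.{0} R) (S : Set C) (c : C) :
    LinearMap.range (muMap R C M S c).hom
      = ⨆ d : ObjectProperty.FullSubcategory (fun d : C => d ∈ S ∧ d ≤ c),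
          LinearMap.range (M.map (homOfLE d.property.2)).hom :=
  range_desc _ _

lemma app_surjective_of_epi {N M : C ⥤ ModuleCat.{0} R} (f : N ⟶ M) (hf : Epi f) (c : C) :
    Function.Surjective (f.app c) := by
  haveI := hf
  haveI : Epi (f.app c) := (NatTrans.epi_iff_epi_app f).mp hf c
  exact (ModuleCat.epi_iff_surjective _).mp this

lemma epi_of_app_surjective {N M : C ⥤ ModuleCat.{0} R} (f : N ⟶ M)
    (h : ∀ c, Function.Surjective (f.app c)) : Epi f := by
  haveI : ∀ c, Epi (f.app c) := fun c => (ModuleCat.epi_iff_surjective _).mpr (h c)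
  exact NatTrans.epi_of_epi_app f

lemma ker_cokernel_π {A B : ModuleCat.{0} R} (φ : A ⟶ B) :
    LinearMap.ker (cokernel.π φ).hom = LinearMap.range φ.hom := by
  have h := ModuleCat.cokernel_π_cokernelIsoRangeQuotient_hom φ
  have hinj : LinearMap.ker ((ModuleCat.cokernelIsoRangeQuotient φ).hom).hom = ⊥ :=
    LinearMap.ker_eq_bot.mpr ((ModuleCat.mono_iff_injective _).mp inferInstance)
  have h2 := congrArg (fun ψ => LinearMap.ker ψ.hom) h
  simp only [ModuleCat.hom_comp, ModuleCat.hom_ofHom, LinearMap.ker_comp, hinj,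
    Submodule.comap_bot, Submodule.ker_mkQ] at h2
  exact h2

lemma naturality_apply {L N : C ⥤ ModuleCat.{0} R} (g : L ⟶ N) {d c : C} (h : d ⟶ c)
    (x : L.obj d) : N.map h (g.app d x) = g.app c (L.map h x) := by
  calc N.map h (g.app d x) = (g.app d ≫ N.map h) x := rfl
    _ = (L.map h ≫ g.app c) x := by rw [g.naturality]
    _ = g.app c (L.map h x) := rfl

lemma map_map_apply (N : C ⥤ ModuleCat.{0} R) {a b c : C} (h₁ : a ≤ b) (h₂ : b ≤ c)
    (x : N.obj a) :
    N.map (homOfLE h₂) (N.map (homOfLE h₁) x) = N.map (homOfLE (h₁.trans h₂)) x := by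
  have : N.map (homOfLE h₁) ≫ N.map (homOfLE h₂) = N.map (homOfLE (h₁.trans h₂)) := by
    rw [← N.map_comp]
    exact congrArg N.map (Subsingleton.elim _ _)
  calc N.map (homOfLE h₂) (N.map (homOfLE h₁) x)
      = (N.map (homOfLE h₁) ≫ N.map (homOfLE h₂)) x := rfl
    _ = N.map (homOfLE (h₁.trans h₂)) x := by rw [this]


/-- The submodule of `F.obj c` generated by the images of `w d` for `d ∈ S`, `d ≤ c`. -/
noncomputable def genSub (F : C ⥤ ModuleCat.{0} R) (S : Set C)
    (W : C → ModuleCat.{0} R) (w : ∀ d : C, W d →ₗ[R] F.obj d) (c : C) :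
    Submodule R (F.obj c) :=
  ⨆ d : {d : C // d ∈ S ∧ d ≤ c},
    LinearMap.range (LinearMap.comp (show F.obj d.1 →ₗ[R] F.obj c from (F.map (homOfLE d.2.2)).hom) (w d.1))

lemma genSub_map_le (F : C ⥤ ModuleCat.{0} R) (S : Set C)
    (W : C → ModuleCat.{0} R) (w : ∀ d : C, W d →ₗ[R] F.obj d) {c c' : C} (h : c ≤ c') :
    Submodule.map (F.map (homOfLE h)).hom (genSub F S W w c) ≤ genSub F S W w c' := by
  rw [genSub, Submodule.map_iSup]
  refine iSup_le fun d => ?_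
  rw [← LinearMap.range_comp]
  have heq : ∀ x : W d.1,
      (F.map (homOfLE h)) ((F.map (homOfLE d.2.2)) (w d.1 x))
        = (F.map (homOfLE (d.2.2.trans h))) (w d.1 x) := fun x => map_map_apply F _ _ _
  intro y hy
  obtain ⟨x, rfl⟩ := hy
  refine le_iSup (fun d' : {d : C // d ∈ S ∧ d ≤ c'} =>
    LinearMap.range (LinearMap.comp (show F.obj d'.1 →ₗ[R] F.obj c' from (F.map (homOfLE d'.2.2)).hom) (w d'.1)))
    ⟨d.1, d.2.1, d.2.2.trans h⟩ ⟨x, (heq x).symm⟩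

lemma range_le_genSub (F : C ⥤ ModuleCat.{0} R) (S : Set C)
    (W : C → ModuleCat.{0} R) (w : ∀ d : C, W d →ₗ[R] F.obj d) {e c : C} (h : e ≤ c)
    (htop : genSub F S W w e = ⊤) :
    LinearMap.range (F.map (homOfLE h)).hom ≤ genSub F S W w c := by
  have : LinearMap.range (F.map (homOfLE h)).hom
      = Submodule.map (F.map (homOfLE h)).hom (genSub F S W w e) := by
    rw [htop, Submodule.map_top]
  rw [this]
  exact genSub_map_le F S W w h

lemma mem_genSub_self (F : C ⥤ ModuleCat.{0} R) (S : Set C)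
    (W : C → ModuleCat.{0} R) (w : ∀ d : C, W d →ₗ[R] F.obj d) {c : C} (hc : c ∈ S)
    (u : W c) : w c u ∈ genSub F S W w c := by
  refine le_iSup (fun d' : {d : C // d ∈ S ∧ d ≤ c} =>
    LinearMap.range (LinearMap.comp (show F.obj d'.1 →ₗ[R] F.obj c from (F.map (homOfLE d'.2.2)).hom) (w d'.1)))
    ⟨c, hc, le_refl c⟩ ⟨u, ?_⟩
  show F.map (homOfLE (le_refl c)) (w c u) = w c u
  have : F.map (homOfLE (le_refl c)) = 𝟙 (F.obj c) := by
    rw [show homOfLE (le_refl c) = 𝟙 c from Subsingleton.elim _ _, F.map_id]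
  rw [this]
  rfl

lemma range_map_le_range_lambdaMap (N : C ⥤ ModuleCat.{0} R) (S : Set C) {d c : C}
    (hd : d ∈ S) (hlt : d < c) :
    LinearMap.range (N.map (homOfLE hlt.le)).hom ≤ LinearMap.range (lambdaMap R C N S c).hom := by
  rw [range_lambdaMap]
  exact le_iSup (fun d' : ObjectProperty.FullSubcategory (fun d : C => d ∈ S ∧ d < c) =>
    LinearMap.range (N.map (homOfLE d'.property.2.le)).hom) ⟨d, hd, hlt⟩

lemma lambdaMap_naturality {N M : C ⥤ ModuleCat.{0} R} (f : N ⟶ M) (S : Set C) (c : C) :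
    lambdaMap R C N S c ≫ f.app c
      = colimMap (Functor.whiskerLeft (ObjectProperty.ι (fun d : C => d ∈ S ∧ d < c)) f)
          ≫ lambdaMap R C M S c := by
  apply colimit.hom_ext
  intro d
  simp only [lambdaMap, colimit.ι_desc_assoc, ι_colimMap_assoc, colimit.ι_desc,
    Functor.whiskerLeft_app]
  exact f.naturality _

lemma apply_lambdaMap_mem {N M : C ⥤ ModuleCat.{0} R} (f : N ⟶ M) (S : Set C) (c : C)
    (y : (colimit (ObjectProperty.ι (fun d : C => d ∈ S ∧ d < c) ⋙ N) : ModuleCat.{0} R)) :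
    f.app c (lambdaMap R C N S c y) ∈ LinearMap.range (lambdaMap R C M S c).hom := by
  have h : f.app c (lambdaMap R C N S c y) = (lambdaMap R C N S c ≫ f.app c) y := rfl
  rw [h, lambdaMap_naturality]
  exact ⟨colimMap (Functor.whiskerLeft (ObjectProperty.ι (fun d : C => d ∈ S ∧ d < c)) f) y, rfl⟩

end Aux

section Dir1
variable {R C}

theorem dir1 (S : Set C) (hart : ArtinianSubset C S) {N M : C ⥤ ModuleCat.{0} R}
    (f : N ⟶ M) (hf : Epi f) (hN : SGenerated R C N S)
    (hker : ∀ (c : C) (x : N.obj c), f.app c x = 0 → ∃ y, lambdaMap R C N S c y = x) :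
    IsMinimalEpi R C f := by
  intro L g
  constructor
  · intro hgf
    have hsur : ∀ c, Function.Surjective ((g ≫ f).app c) :=
      fun c => app_surjective_of_epi (g ≫ f) hgf c
    have key : ∀ c ∈ S, Function.Surjective (g.app c) := by
      intro c hc
      refine hart.induction hc (P := fun c => Function.Surjective (g.app c)) ?_
      intro y hy IH
      have hlam : LinearMap.range (lambdaMap R C N S y).hom ≤ LinearMap.range (g.app y).hom := by
        rw [range_lambdaMap]
        refine iSup_le fun d => ?_
        rintro x ⟨z, rfl⟩
        obtain ⟨w, rfl⟩ := IH d.obj d.property.1 d.property.2 z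
        exact ⟨L.map (homOfLE d.property.2.le) w, (naturality_apply g _ w).symm⟩
      intro x
      obtain ⟨l, hl⟩ := hsur y (f.app y x)
      have hl' : (g ≫ f).app y l = f.app y (g.app y l) := rfl
      have h0 : f.app y (x - g.app y l) = 0 := by
        rw [map_sub, ← hl', hl, sub_self]
      obtain ⟨w, hw⟩ := hker y _ h0
      obtain ⟨u, hu⟩ := hlam ⟨w, hw⟩
      exact ⟨u + l, by rw [map_add, hu]; abel_nf⟩
    have hall : ∀ c, Function.Surjective (g.app c) := by
      intro c
      have hmu := (ModuleCat.epi_iff_surjective _).mp (hN c)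
      rw [← LinearMap.range_eq_top] at hmu ⊢
      rw [range_muMap] at hmu
      rw [eq_top_iff, ← hmu]
      refine iSup_le fun d => ?_
      rintro x ⟨z, rfl⟩
      obtain ⟨w, rfl⟩ := key d.obj d.property.1 z
      exact ⟨L.map (homOfLE d.property.2) w, (naturality_apply g _ w).symm⟩
    exact epi_of_app_surjective g hall
  · intro hg
    haveI := hg; haveI := hf
    exact epi_comp g f

end Dir1

section Dir2
variable {R C}

theorem dir2 (S : Set C) (hart : ArtinianSubset C S) {N M : C ⥤ ModuleCat.{0} R}
    (f : N ⟶ M) (hf : Epi f) (hN : SGenerated R C N S) (hM : SGenerated R C M S)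
    (hmin : IsMinimalEpi R C f)
    (hproj : ∀ c ∈ S, Module.Projective R (splitObj R C M S c)) :
    ∀ (c : C) (x : N.obj c), f.app c x = 0 → ∃ y, lambdaMap R C N S c y = x := by
  classical
  have hfs : ∀ c, Function.Surjective (f.app c) := app_surjective_of_epi f hf
  have hts : ∀ c : C, ∃ t : splitObj R C M S c →ₗ[R] N.obj c,
      (c ∈ S → ∀ u, cokernel.π (lambdaMap R C M S c) (f.app c (t u)) = u) ∧
      (c ∉ S → t = 0) := by
    intro c
    by_cases hc : c ∈ S
    · haveI := hproj c hc
      have hπ : Function.Surjective (cokernel.π (lambdaMap R C M S c)) :=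
        (ModuleCat.epi_iff_surjective _).mp inferInstance
      have hcomp : Function.Surjective
          (LinearMap.comp
            (show M.obj c →ₗ[R] splitObj R C M S c from (cokernel.π (lambdaMap R C M S c)).hom)
            (show N.obj c →ₗ[R] M.obj c from (f.app c).hom)) := by
        rw [LinearMap.coe_comp]
        exact hπ.comp (hfs c)
      obtain ⟨t, ht⟩ := Module.projective_lifting_property _ LinearMap.id hcomp
      refine ⟨t, fun _ u => ?_, fun h => absurd hc h⟩
      have h2 := LinearMap.congr_fun ht u
      exact h2
    · exact ⟨0, fun h => absurd h hc, fun _ => rfl⟩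
  choose t ht1 ht2 using hts
  set s : ∀ d : C, (splitObj R C M S d : Type) →ₗ[R] M.obj d :=
    fun d => LinearMap.comp (show N.obj d →ₗ[R] M.obj d from (f.app d).hom) (t d) with hs
  -- Claim A, first for c ∈ S by well-founded induction
  have claimS : ∀ c ∈ S, genSub M S (splitObj R C M S) s c = ⊤ := by
    intro c hc
    refine hart.induction hc (P := fun c => genSub M S (splitObj R C M S) s c = ⊤) ?_
    intro y hy IH
    rw [eq_top_iff]
    intro x _
    set u := cokernel.π (lambdaMap R C M S y) x with hu
    have hker : x - s y u ∈ LinearMap.range (lambdaMap R C M S y).hom := by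
      rw [← ker_cokernel_π]
      show cokernel.π (lambdaMap R C M S y) (x - s y u) = 0
      rw [map_sub]
      have h1 : cokernel.π (lambdaMap R C M S y) (s y u) = u := ht1 y hy u
      rw [h1, ← hu, sub_self]
    have hlam : LinearMap.range (lambdaMap R C M S y).hom ≤ genSub M S (splitObj R C M S) s y := by
      rw [range_lambdaMap]
      refine iSup_le fun d => ?_
      exact range_le_genSub M S (splitObj R C M S) s d.property.2.le
        (IH d.obj d.property.1 d.property.2)
    have h1 : x - s y u ∈ genSub M S (splitObj R C M S) s y := hlam hker
    have h2 : s y u ∈ genSub M S (splitObj R C M S) s y := mem_genSub_self M S _ s hy u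
    have h3 := Submodule.add_mem _ h1 h2
    rwa [sub_add_cancel] at h3
  have claimA : ∀ c, genSub M S (splitObj R C M S) s c = ⊤ := by
    intro c
    rw [eq_top_iff]
    have hmu := (ModuleCat.epi_iff_surjective _).mp (hM c)
    rw [← LinearMap.range_eq_top, range_muMap] at hmu
    rw [← hmu]
    exact iSup_le fun d => range_le_genSub M S (splitObj R C M S) s d.property.2
      (claimS d.obj d.property.1)
  -- The subfunctor L of N generated by the images of the lifts
  have hmono : ∀ {c c' : C} (h : c ⟶ c') (x : N.obj c),
      x ∈ genSub N S (splitObj R C M S) t c → N.map h x ∈ genSub N S (splitObj R C M S) t c' :=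
    fun {c c'} h x hx => genSub_map_le N S (splitObj R C M S) t (leOfHom h) ⟨x, hx, rfl⟩
  let L : C ⥤ ModuleCat.{0} R :=
    { obj := fun c => ModuleCat.of R (genSub N S (splitObj R C M S) t c)
      map := fun {c c'} h => ModuleCat.ofHom (LinearMap.restrict (N.map h).hom (fun x hx => hmono h x hx))
      map_id := fun c => by
        ext x
        show N.map (𝟙 c) x.1 = x.1
        rw [N.map_id]
        rfl
      map_comp := fun {a b c} h₁ h₂ => by
        ext x
        show N.map (h₁ ≫ h₂) x.1 = N.map h₂ (N.map h₁ x.1)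
        rw [N.map_comp]
        rfl }
  let g : L ⟶ N :=
    { app := fun c => ModuleCat.ofHom (genSub N S (splitObj R C M S) t c).subtype
      naturality := fun c c' h => by
        ext x
        rfl }
  have hgf : Epi (g ≫ f) := by
    apply epi_of_app_surjective
    intro c m
    have hm : m ∈ genSub M S (splitObj R C M S) s c := claimA c ▸ Submodule.mem_top
    have hle : genSub M S (splitObj R C M S) s c ≤ LinearMap.range ((g ≫ f).app c).hom := by
      refine iSup_le fun d => ?_
      rintro z ⟨u, rfl⟩
      have hmem : N.map (homOfLE d.2.2) (t d.1 u) ∈ genSub N S (splitObj R C M S) t c :=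
        le_iSup (fun d' : {e : C // e ∈ S ∧ e ≤ c} =>
          LinearMap.range (LinearMap.comp
            (show N.obj d'.1 →ₗ[R] N.obj c from (N.map (homOfLE d'.2.2)).hom) (t d'.1))) d ⟨u, rfl⟩
      refine ⟨⟨N.map (homOfLE d.2.2) (t d.1 u), hmem⟩, ?_⟩
      show f.app c (N.map (homOfLE d.2.2) (t d.1 u)) = _
      exact (naturality_apply f (homOfLE d.2.2) (t d.1 u)).symm
    obtain ⟨w, hw⟩ := hle hm
    exact ⟨w, hw⟩
  have hepi_g : Epi g := (hmin L g).mp hgf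
  have hNtop : ∀ c, genSub N S (splitObj R C M S) t c = ⊤ := by
    intro c
    have hsur := app_surjective_of_epi g hepi_g c
    have : LinearMap.range ((genSub N S (splitObj R C M S) t c).subtype) = ⊤ :=
      LinearMap.range_eq_top.mpr hsur
    rwa [Submodule.range_subtype] at this
  -- conclusion
  intro c x hx
  have hxmem : x ∈ genSub N S (splitObj R C M S) t c := hNtop c ▸ Submodule.mem_top
  have hle : genSub N S (splitObj R C M S) t c
      ≤ LinearMap.range (lambdaMap R C N S c).hom ⊔ LinearMap.range (t c) := by
    refine iSup_le fun d => ?_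
    obtain ⟨d, hd1, hd2⟩ := d
    rcases eq_or_lt_of_le hd2 with heq | hlt
    · subst heq
      rintro z ⟨u, rfl⟩
      apply Submodule.mem_sup_right
      refine ⟨u, ?_⟩
      show t d u = N.map (homOfLE hd2) (t d u)
      rw [show homOfLE hd2 = 𝟙 d from Subsingleton.elim _ _, N.map_id]
      rfl
    · rintro z ⟨u, rfl⟩
      exact Submodule.mem_sup_left (range_map_le_range_lambdaMap N S hd1 hlt ⟨t d u, rfl⟩)
  obtain ⟨a, ha, b, hb, hab⟩ := Submodule.mem_sup.mp (hle hxmem)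
  obtain ⟨y, rfl⟩ := ha
  obtain ⟨v, rfl⟩ := hb
  by_cases hc : c ∈ S
  · have h1 : cokernel.π (lambdaMap R C M S c) (f.app c (lambdaMap R C N S c y)) = 0 := by
      have hmem := apply_lambdaMap_mem f S c y
      rw [← ker_cokernel_π] at hmem
      exact hmem
    have h2 : cokernel.π (lambdaMap R C M S c) (f.app c (t c v)) = v := ht1 c hc v
    have h3 : f.app c (lambdaMap R C N S c y) + f.app c (t c v) = 0 := by
      rw [← map_add, hab, hx]
    have h4 := congrArg (cokernel.π (lambdaMap R C M S c)) h3
    rw [map_add, h1, h2] at h4; erw [zero_add, map_zero] at h4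
    refine ⟨y, ?_⟩
    rw [← hab, h4]; erw [map_zero, add_zero]
  · have h0 : t c = 0 := ht2 c hc
    refine ⟨y, ?_⟩
    rw [← hab, h0]
    simp

end Dir2

/-- Let `S` be Artinian and `f : N ⟶ M` an epimorphism of `S`-generated
modules. If `(Ker f)(c) ⊆ Im λ_{N,c}` for all `c`, then `f` is minimal; conversely, if `f` is
minimal and `S_{S,c}M` is a projective `R`-module for all `c ∈ S`, then
`(Ker f)(c) ⊆ Im λ_{N,c}` for all `c`. -/
theorem statement12 (S : Set C) (hart : ArtinianSubset C S) {N M : C ⥤ ModuleCat.{0} R}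
    (f : N ⟶ M) (hf : Epi f) (hN : SGenerated R C N S) (hM : SGenerated R C M S) :
    ((∀ (c : C) (x : N.obj c), f.app c x = 0 → ∃ y, lambdaMap R C N S c y = x) →
      IsMinimalEpi R C f) ∧
    (IsMinimalEpi R C f → (∀ c ∈ S, Module.Projective R (splitObj R C M S c)) →
      ∀ (c : C) (x : N.obj c), f.app c x = 0 → ∃ y, lambdaMap R C N S c y = x) := by
  constructor
  · intro hker
    exact dir1 S hart f hf hN hker
  · intro hmin hproj
    exact dir2 S hart f hf hN hM hmin hproj

end Persist
end

section
/- Let R be a commutative ring, C a poset, S ⊆ C an Artinian subset, and M an S-generated RC-module. Then M is B_S(M)-generated; moreover, B_S(M) is the minimum element (under inclusion) of the set {T ⊆ S : M is T-generated}. -/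
open CategoryTheory Limits

namespace Persist

variable (R : Type) [CommRing R] (C : Type) [PartialOrder C]

lemma epi_desc_iff {J : Type} [Category.{0} J] (F : J ⥤ ModuleCat.{0} R) [HasColimit F]
    (cc : Cocone F) :
    Epi (colimit.desc F cc) ↔
      (⨆ j, LinearMap.range (show F.obj j ⟶ cc.pt from cc.ι.app j).hom) = ⊤ := by
  constructor
  · intro h
    set N := ⨆ j, LinearMap.range (show F.obj j ⟶ cc.pt from cc.ι.app j).hom with hN
    have hcomp : colimit.desc F cc ≫ (ModuleCat.ofHom N.mkQ) = colimit.desc F cc ≫ 0 := by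
      apply colimit.hom_ext
      intro j
      rw [colimit.ι_desc_assoc, comp_zero, comp_zero]
      ext x
      simp only [ModuleCat.hom_comp, ModuleCat.hom_ofHom, ModuleCat.hom_zero, LinearMap.comp_apply,
        LinearMap.zero_apply, Submodule.mkQ_apply]
      exact (Submodule.Quotient.mk_eq_zero N).mpr
        (le_iSup (fun j => LinearMap.range (show F.obj j ⟶ cc.pt from cc.ι.app j).hom) j
          (LinearMap.mem_range_self _ x))
    have h0 : (ModuleCat.ofHom N.mkQ) = 0 := (cancel_epi _).mp hcomp
    rw [eq_top_iff]
    intro x _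
    have : N.mkQ x = 0 := congrArg (fun f => f.hom x) h0
    exact (Submodule.Quotient.mk_eq_zero N).mp this
  · intro h
    rw [ModuleCat.epi_iff_surjective, ← LinearMap.range_eq_top, eq_top_iff, ← h]
    apply iSup_le
    intro j x hx
    obtain ⟨y, rfl⟩ := hx
    exact ⟨(colimit.ι F j).hom y, congrArg (fun f => f.hom y) (colimit.ι_desc cc j)⟩

lemma epi_muMap_iff (M : C ⥤ ModuleCat.{0} R) (T : Set C) (c : C) :
    Epi (muMap R C M T c) ↔
      (⨆ d : ObjectProperty.FullSubcategory (fun d : C => d ∈ T ∧ d ≤ c),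
        LinearMap.range ((M.map (homOfLE d.property.2)).hom)) = ⊤ :=
  epi_desc_iff R _ _

lemma epi_lambdaMap_iff (M : C ⥤ ModuleCat.{0} R) (T : Set C) (c : C) :
    Epi (lambdaMap R C M T c) ↔
      (⨆ d : ObjectProperty.FullSubcategory (fun d : C => d ∈ T ∧ d < c),
        LinearMap.range ((M.map (homOfLE d.property.2.le)).hom)) = ⊤ :=
  epi_desc_iff R _ _

/-- If `S` is Artinian and `M` is `S`-generated, then `M` is
`B_S(M)`-generated, and `B_S(M)` is the minimum of `{T ⊆ S : M is T-generated}`. -/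
theorem statement13 (S : Set C) (hart : ArtinianSubset C S) (M : C ⥤ ModuleCat.{0} R)
    (hM : SGenerated R C M S) :
    (births R C M S ⊆ S ∧ SGenerated R C M (births R C M S)) ∧
    (∀ T ⊆ S, SGenerated R C M T → births R C M S ⊆ T) := by
  -- key: for every d ∈ S and d ≤ c, the image of M(d) in M(c) lies in the births-sup
  have key : ∀ d : S, ∀ c : C, ∀ h : (d : C) ≤ c,
      LinearMap.range ((M.map (homOfLE h)).hom) ≤
        ⨆ b : ObjectProperty.FullSubcategory (fun b : C => b ∈ births R C M S ∧ b ≤ c),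
          LinearMap.range ((M.map (homOfLE b.property.2)).hom) := by
    intro d
    induction d using WellFounded.induction hart with
    | _ d IH =>
      intro c hdc
      by_cases hb : (d : C) ∈ births R C M S
      · exact le_iSup (fun b : ObjectProperty.FullSubcategory (fun b : C => b ∈ births R C M S ∧ b ≤ c) =>
          LinearMap.range ((M.map (homOfLE b.property.2)).hom))
          ⟨(d : C), hb, hdc⟩
      · have hepi : Epi (lambdaMap R C M S (d : C)) := not_not.mp hb
        rw [epi_lambdaMap_iff] at hepi
        rintro x ⟨y, rfl⟩
        have hy : y ∈ (⊤ : Submodule R (M.obj (d : C))) := trivial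
        rw [← hepi] at hy
        have hmap : ((M.map (homOfLE hdc)).hom) y ∈
            Submodule.map ((M.map (homOfLE hdc)).hom)
              (⨆ e : ObjectProperty.FullSubcategory (fun e : C => e ∈ S ∧ e < (d : C)),
                LinearMap.range ((M.map (homOfLE e.property.2.le)).hom)) :=
          Submodule.mem_map_of_mem hy
        rw [Submodule.map_iSup] at hmap
        have hb2 : ∀ e : ObjectProperty.FullSubcategory (fun e : C => e ∈ S ∧ e < (d : C)),
            Submodule.map ((M.map (homOfLE hdc)).hom)
              (LinearMap.range ((M.map (homOfLE e.property.2.le)).hom)) ≤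
            ⨆ b : ObjectProperty.FullSubcategory (fun b : C => b ∈ births R C M S ∧ b ≤ c),
              LinearMap.range ((M.map (homOfLE b.property.2)).hom) := by
          intro e
          rw [← LinearMap.range_comp]
          have hcomp : ((M.map (homOfLE hdc)).hom).comp
              ((M.map (homOfLE e.property.2.le)).hom) =
              ((M.map (homOfLE (e.property.2.le.trans hdc))).hom) := by
            rw [← ModuleCat.hom_comp, ← M.map_comp]
            rfl
          rw [hcomp]
          exact IH ⟨e.obj, e.property.1⟩ e.property.2 c (e.property.2.le.trans hdc)
        exact iSup_le hb2 hmap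
  have hsub : births R C M S ⊆ S := by
    intro c hc
    by_contra hcS
    apply hc
    rw [epi_lambdaMap_iff]
    have := (epi_muMap_iff R C M S c).mp (hM c)
    rw [eq_top_iff, ← this]
    apply iSup_le
    intro d
    have hlt : d.obj < c := lt_of_le_of_ne d.property.2 (fun h => hcS (h ▸ d.property.1))
    exact le_iSup (fun b : ObjectProperty.FullSubcategory (fun b : C => b ∈ S ∧ b < c) =>
      LinearMap.range ((M.map (homOfLE b.property.2.le)).hom))
      ⟨d.obj, d.property.1, hlt⟩
  refine ⟨⟨hsub, ?_⟩, ?_⟩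
  · intro c
    rw [epi_muMap_iff]
    have := (epi_muMap_iff R C M S c).mp (hM c)
    rw [eq_top_iff, ← this]
    apply iSup_le
    intro d
    exact key ⟨d.obj, d.property.1⟩ c d.property.2
  · intro T hTS hT c hc
    by_contra hcT
    apply hc
    rw [epi_lambdaMap_iff]
    have := (epi_muMap_iff R C M T c).mp (hT c)
    rw [eq_top_iff, ← this]
    apply iSup_le
    intro d
    have hlt : d.obj < c := lt_of_le_of_ne d.property.2 (fun h => hcT (h ▸ d.property.1))
    exact le_iSup (fun b : ObjectProperty.FullSubcategory (fun b : C => b ∈ S ∧ b < c) =>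
      LinearMap.range ((M.map (homOfLE b.property.2.le)).hom))
      ⟨d.obj, hTS d.property.1, hlt⟩


end Persist
end

section
/- Let G be a commutative cancellative monoid whose divisibility order makes it a partially ordered set that is weakly bounded from above (every finite subset has only finitely many minimal upper bounds). Then G is mub-complete if and only if every pair of elements g, h ∈ G has a maximal common divisor. -/
namespace Persist16

variable (G : Type) [CancelCommMonoid G]

/-- `c` is an upper bound of `T` in the divisibility order. -/
def IsDvdUB (T : Set G) (c : G) : Prop :=
  ∀ t ∈ T, t ∣ c

/-- `c` is a minimal upper bound of `T` in the divisibility order. -/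
def IsDvdMUB (T : Set G) (c : G) : Prop :=
  IsDvdUB G T c ∧ ∀ d : G, IsDvdUB G T d → d ∣ c → d = c

/-- `G` is weakly bounded from above: every finite subset has only finitely many minimal
upper bounds. -/
def DvdWeaklyBoundedAbove : Prop :=
  ∀ T : Set G, T.Finite → {c : G | IsDvdMUB G T c}.Finite

/-- `G` is mub-complete: for every finite non-empty subset `T` and every upper bound `c` of
`T` there exists a minimal upper bound `s` of `T` with `s ∣ c`. -/
def DvdMubComplete : Prop :=
  ∀ T : Set G, T.Finite → T.Nonempty → ∀ c : G, IsDvdUB G T c →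
    ∃ s : G, IsDvdMUB G T s ∧ s ∣ c

/-- `l` is a maximal common divisor of `g` and `h`. -/
def IsMaxCommonDivisor (g h l : G) : Prop :=
  l ∣ g ∧ l ∣ h ∧ ∀ k : G, k ∣ g → k ∣ h → l ∣ k → k = l

/-- A finite nonempty set has a dvd-minimal element (given antisymmetry of dvd). -/
lemma exists_dvd_minimal (hanti : ∀ g h : G, g ∣ h → h ∣ g → g = h) :
    ∀ S : Finset G, S.Nonempty → ∃ x ∈ S, ∀ y ∈ S, y ∣ x → y = x := by
  intro S
  induction S using Finset.cons_induction with
  | empty => intro h; simp at h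
  | cons a S ha ih =>
    intro _
    rcases S.eq_empty_or_nonempty with rfl | hS
    · exact ⟨a, by simp, by simp⟩
    · obtain ⟨x, hxS, hxmin⟩ := ih hS
      by_cases hax : a ∣ x
      · refine ⟨a, Finset.mem_cons_self _ _, ?_⟩
        intro y hy hya
        rcases Finset.mem_cons.mp hy with rfl | hyS
        · rfl
        · have hyx : y = x := hxmin y hyS (hya.trans hax)
          have hax' : a = x := hanti a x hax (hyx ▸ hya)
          rw [hyx, hax']
      · refine ⟨x, Finset.mem_cons.mpr (Or.inr hxS), ?_⟩
        intro y hy hyx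
        rcases Finset.mem_cons.mp hy with rfl | hyS
        · exact absurd hyx hax
        · exact hxmin y hyS hyx

/-- Pair mub-completeness from existence of maximal common divisors. -/
lemma pair_mub (hanti : ∀ g h : G, g ∣ h → h ∣ g → g = h)
    (hmcd : ∀ g h : G, ∃ l : G, IsMaxCommonDivisor G g h l)
    (g h c : G) (hg : g ∣ c) (hh : h ∣ c) :
    ∃ s : G, IsDvdMUB G {g, h} s ∧ s ∣ c := by
  obtain ⟨g', hg'⟩ := hg
  obtain ⟨h', hh'⟩ := hh
  obtain ⟨l, hlg, hlh, hlmax⟩ := hmcd g' h'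
  obtain ⟨a, ha⟩ := hlg
  obtain ⟨b, hb⟩ := hlh
  refine ⟨g * a, ⟨?_, ?_⟩, ?_⟩
  · -- upper bound
    have hcs : c = g * a * l := by rw [hg', ha]; ac_rfl
    have hsh : g * a = h * b := by
      apply mul_right_cancel (b := l)
      rw [← hcs, hh', hb]; ac_rfl
    intro t ht
    rcases ht with rfl | ht
    · exact dvd_mul_right _ _
    · simp only [Set.mem_singleton_iff] at ht
      subst ht
      rw [hsh]; exact dvd_mul_right _ _
  · -- minimality among upper bounds dividing s
    intro d hd hds
    have hgd : g ∣ d := hd g (by simp)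
    have hhd : h ∣ d := hd h (by simp)
    have hcs : c = g * a * l := by rw [hg', ha]; ac_rfl
    have hdc : d ∣ c := hds.trans ⟨l, hcs⟩
    obtain ⟨e, he⟩ := hdc
    obtain ⟨m, hm⟩ := hgd
    have heg' : e ∣ g' := by
      refine ⟨m, ?_⟩
      apply mul_left_cancel (a := g)
      rw [← hg', he, hm]; ac_rfl
    have heh' : e ∣ h' := by
      obtain ⟨n, hn⟩ := hhd
      refine ⟨n, ?_⟩
      apply mul_left_cancel (a := h)
      rw [← hh', he, hn]; ac_rfl
    obtain ⟨k, hk⟩ := hds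
    have hle : l ∣ e := by
      refine ⟨k, ?_⟩
      apply mul_left_cancel (a := d)
      rw [← he, hcs, hk]; ac_rfl
    have hel : e = l := hlmax e heg' heh' hle
    apply mul_right_cancel (b := l)
    rw [← hcs, he, hel]
  · exact ⟨l, by rw [hg', ha]; ac_rfl⟩

lemma gen_mub (hanti : ∀ g h : G, g ∣ h → h ∣ g → g = h)
    (hwba : DvdWeaklyBoundedAbove G)
    (hmcd : ∀ g h : G, ∃ l : G, IsMaxCommonDivisor G g h l) :
    ∀ S : Finset G, S.Nonempty → ∀ c : G, IsDvdUB G ↑S c →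
      ∃ s : G, IsDvdMUB G ↑S s ∧ s ∣ c := by
  intro S
  induction S using Finset.cons_induction with
  | empty => intro h; simp at h
  | cons t S ht ih =>
    intro _ c hub
    have htc : t ∣ c := hub t (by simp)
    rcases S.eq_empty_or_nonempty with rfl | hS
    · refine ⟨t, ⟨?_, ?_⟩, htc⟩
      · intro x hx; simp at hx; subst hx; rfl
      · intro d hd hdt
        exact hanti d t hdt (hd t (by simp))
    · have hubS : IsDvdUB G ↑S c := fun x hx => hub x (by simp [Finset.mem_cons]; tauto)
      -- the key set W
      set W : Set G := {r | ∃ m, IsDvdMUB G ↑S m ∧ IsDvdMUB G {m, t} r ∧ r ∣ c} with hW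
      have hWfin : W.Finite := by
        have hsub : W ⊆ ⋃ m ∈ {m : G | IsDvdMUB G ↑S m}, {r : G | IsDvdMUB G {m, t} r} := by
          rintro r ⟨m, hm, hr, _⟩
          exact Set.mem_biUnion hm hr
        exact Set.Finite.subset
          (Set.Finite.biUnion (hwba ↑S (S.finite_toSet))
            (fun m _ => hwba {m, t} (Set.toFinite _))) hsub
      -- every upper bound of cons t S dividing c is divisible by an element of W
      have hdom : ∀ d : G, IsDvdUB G ↑(Finset.cons t S ht) d → d ∣ c → ∃ r ∈ W, r ∣ d := by
        intro d hd hdc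
        have hdS : IsDvdUB G ↑S d := fun x hx => hd x (by simp [Finset.mem_cons]; tauto)
        obtain ⟨m, hm, hmd⟩ := ih hS d hdS
        have htd : t ∣ d := hd t (by simp)
        obtain ⟨r, hr, hrd⟩ := pair_mub G hanti hmcd m t d hmd htd
        exact ⟨r, ⟨m, hm, hr, hrd.trans hdc⟩, hrd⟩
      -- W is contained in the set of upper bounds of cons t S dividing c
      have hWub : ∀ r ∈ W, IsDvdUB G ↑(Finset.cons t S ht) r ∧ r ∣ c := by
        rintro r ⟨m, hm, hr, hrc⟩
        refine ⟨?_, hrc⟩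
        intro x hx
        have hmr : m ∣ r := hr.1 m (by simp)
        have htr : t ∣ r := hr.1 t (by simp)
        rcases Finset.mem_coe.mp hx with hx'
        rcases Finset.mem_cons.mp hx' with rfl | hxS
        · exact htr
        · exact (hm.1 x hxS).trans hmr
      -- W is nonempty
      have hWne : W.Nonempty := by
        obtain ⟨r, hr, _⟩ := hdom c (fun x hx => hub x hx) dvd_rfl
        exact ⟨r, hr⟩
      -- take a minimal element of W
      have hWne' : hWfin.toFinset.Nonempty := by
        obtain ⟨r, hr⟩ := hWne
        exact ⟨r, hWfin.mem_toFinset.mpr hr⟩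
      obtain ⟨s, hsW, hsmin⟩ := exists_dvd_minimal G hanti hWfin.toFinset hWne'
      have hsW' : s ∈ W := hWfin.mem_toFinset.mp hsW
      obtain ⟨hsub, hsc⟩ := hWub s hsW'
      refine ⟨s, ⟨hsub, ?_⟩, hsc⟩
      intro d hd hds
      obtain ⟨r, hrW, hrd⟩ := hdom d hd (hds.trans hsc)
      have hrs : r = s := hsmin r (hWfin.mem_toFinset.mpr hrW) (hrd.trans hds)
      exact hanti d s hds (hrs ▸ hrd)

/-- A commutative cancellative monoid whose divisibility order is a partial
order (antisymmetric) and which is weakly bounded from above is mub-complete iff every pair of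
elements has a maximal common divisor. -/
theorem statement16 (hanti : ∀ g h : G, g ∣ h → h ∣ g → g = h)
    (hwba : DvdWeaklyBoundedAbove G) :
    DvdMubComplete G ↔ ∀ g h : G, ∃ l : G, IsMaxCommonDivisor G g h l := by
  constructor
  · intro hmub g h
    have hfin : ({g, h} : Set G).Finite := (Set.finite_singleton h).insert g
    have hne : ({g, h} : Set G).Nonempty := ⟨g, by simp⟩
    have hub : IsDvdUB G {g, h} (g * h) := by
      intro t ht
      rcases ht with rfl | ht
      · exact dvd_mul_right _ _
      · simp only [Set.mem_singleton_iff] at ht; subst ht; exact dvd_mul_left _ _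
    obtain ⟨s, ⟨hsub, hsmin⟩, hsd⟩ := hmub {g, h} hfin hne (g * h) hub
    obtain ⟨d, hd⟩ := hsd
    obtain ⟨a, ha⟩ := hsub g (by simp)
    obtain ⟨b, hb⟩ := hsub h (by simp)
    refine ⟨d, ?_, ?_, ?_⟩
    · -- d ∣ g
      refine ⟨b, ?_⟩
      apply mul_left_cancel (a := h)
      rw [mul_comm h g, hd, hb]; ac_rfl
    · -- d ∣ h
      refine ⟨a, ?_⟩
      apply mul_left_cancel (a := g)
      rw [hd, ha]; ac_rfl
    · -- maximality
      intro k hkg hkh hdk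
      obtain ⟨p, hp⟩ := hkg
      obtain ⟨m, hm⟩ := hkh
      -- corresponding upper bound c_k = p * h, with k * (p*h) = g*h
      have hck_ub : IsDvdUB G {g, h} (p * h) := by
        intro x hx
        rcases hx with rfl | hx
        · exact ⟨m, by rw [hm, hp]; ac_rfl⟩
        · simp only [Set.mem_singleton_iff] at hx; subst hx; exact dvd_mul_left _ _
      obtain ⟨q, hq⟩ := hdk
      have hck_dvd : p * h ∣ s := by
        refine ⟨q, ?_⟩
        apply mul_right_cancel (b := d)
        rw [← hd, hp, hq]; ac_rfl
      have hck_eq : p * h = s := hsmin (p * h) hck_ub hck_dvd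
      apply mul_right_cancel (b := p * h)
      calc k * (p * h) = g * h := by rw [hp]; ac_rfl
        _ = s * d := hd
        _ = d * (p * h) := by rw [hck_eq]; exact mul_comm _ _
  · intro hmcd T hT hne c hub
    have hne' : hT.toFinset.Nonempty := by
      obtain ⟨x, hx⟩ := hne
      exact ⟨x, hT.mem_toFinset.mpr hx⟩
    obtain ⟨s, hs1, hs2⟩ := gen_mub G hanti hwba hmcd hT.toFinset hne' c
      (fun x hx => hub x (hT.mem_toFinset.mp hx))
    rw [hT.coe_toFinset] at hs1
    exact ⟨s, hs1, hs2⟩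

end Persist16
end

section
/- Let R be a commutative ring and C a poset that is weakly bounded from above and mub-complete. If an RC-module M is S-determined for some finite subset S ⊆ C, then M is Ŝ̂-presented, where Ŝ̂ is obtained by applying the hat operation twice to S; in particular Ŝ̂ is a finite support of a presentation (FSP) of M. -/
open CategoryTheory Limits

namespace Persist

variable (R : Type) [CommRing R] (C : Type) [PartialOrder C]

/-- The set of minimal upper bounds of `T`. -/
def mubSet (T : Set C) : Set C :=
  {c : C | c ∈ upperBounds T ∧ ∀ d ∈ upperBounds T, d ≤ c → d = c}

/-- The poset `C` is weakly bounded from above if every finite subset has only finitely many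
minimal upper bounds. -/
def WeaklyBoundedAbove : Prop :=
  ∀ T : Set C, T.Finite → (mubSet C T).Finite

/-- The poset `C` is mub-complete if for every finite non-empty subset `T` and
every upper bound `c` of `T` there is a minimal upper bound `s` of `T` with `s ≤ c`. -/
def MubComplete : Prop :=
  ∀ T : Set C, T.Finite → T.Nonempty → ∀ c ∈ upperBounds T, ∃ s ∈ mubSet C T, s ≤ c

/-- The hat operation: the set of minimal upper bounds of non-empty subsets of `S`. -/
def hatSet (S : Set C) : Set C :=
  {c : C | ∃ T : Set C, T ⊆ S ∧ T.Nonempty ∧ c ∈ mubSet C T}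

/-- `M` is `S`-determined: `supp M ⊆ ↑S` and whenever `c ≤ d` with
`S ∩ ↓c = S ∩ ↓d`, the map `M(c ≤ d)` is an isomorphism. -/
def SDetermined (M : C ⥤ ModuleCat.{0} R) (S : Set C) : Prop :=
  supp R C M ⊆ {c : C | ∃ s ∈ S, s ≤ c} ∧
    ∀ (c d : C) (h : c ≤ d), S ∩ Set.Iic c = S ∩ Set.Iic d → IsIso (M.map (homOfLE h))

lemma hat_finite (hwba : WeaklyBoundedAbove C) {S : Set C} (hS : S.Finite) :
    (hatSet C S).Finite := by
  have hsub : hatSet C S ⊆ ⋃ T ∈ {T : Set C | T ⊆ S}, mubSet C T := by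
    rintro c ⟨T, hTS, _, hc⟩
    exact Set.mem_biUnion hTS hc
  exact Set.Finite.subset
    (Set.Finite.biUnion (Set.Finite.finite_subsets hS) (fun T hT => hwba T (hS.subset hT))) hsub

lemma subset_hat (S : Set C) : S ⊆ hatSet C S := by
  intro s hs
  refine ⟨{s}, by simpa, ⟨s, rfl⟩, ?_, ?_⟩
  · intro x hx
    exact le_of_eq hx
  · intro d hd hds
    exact le_antisymm hds (hd rfl)

lemma hat_ge {S : Set C} {d : C} (hd : d ∈ hatSet C S) : ∃ u ∈ S, u ≤ d := by
  obtain ⟨T, hTS, ⟨t, ht⟩, hub, _⟩ := hd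
  exact ⟨t, hTS ht, hub ht⟩

lemma exists_sharp (hmub : MubComplete C) {S : Set C} (hS : S.Finite) {d : C}
    (hne : (S ∩ Set.Iic d).Nonempty) :
    ∃ s ∈ hatSet C S, s ≤ d ∧ S ∩ Set.Iic s = S ∩ Set.Iic d := by
  have hTfin : (S ∩ Set.Iic d).Finite := hS.inter_of_left _
  have hub : d ∈ upperBounds (S ∩ Set.Iic d) := fun x hx => hx.2
  obtain ⟨s, hsT, hsd⟩ := hmub _ hTfin hne d hub
  refine ⟨s, ⟨S ∩ Set.Iic d, Set.inter_subset_left, hne, hsT⟩, hsd, ?_⟩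
  apply Set.Subset.antisymm
  · rintro x ⟨hxS, hxs⟩
    exact ⟨hxS, le_trans hxs hsd⟩
  · rintro x hx
    exact ⟨hx.1, hsT.1 hx⟩

/-- If `C` is weakly bounded from above and mub-complete and `M` is
`S`-determined for a finite `S ⊆ C`, then `M` is `Ŝ̂`-presented; in particular `Ŝ̂` is a
finite support of a presentation (FSP) of `M`. -/
theorem statement17 (hwba : WeaklyBoundedAbove C) (hmub : MubComplete C)
    (M : C ⥤ ModuleCat.{0} R) (S : Set C) (hS : S.Finite) (hdet : SDetermined R C M S) :
    (hatSet C (hatSet C S)).Finite ∧ SPresented R C M (hatSet C (hatSet C S)) := by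
  refine ⟨hat_finite C hwba (hat_finite C hwba hS), ?_⟩
  intro c
  set V : Set C := hatSet C (hatSet C S) with hV
  set G := ObjectProperty.ι (fun d : C => d ∈ V ∧ d ≤ c) ⋙ M with hG
  by_cases hne : (S ∩ Set.Iic c).Nonempty
  · -- main case
    obtain ⟨s, hsHat, hsc, hEq⟩ := exists_sharp C hmub hS hne
    have hsV : s ∈ V := subset_hat C (hatSet C S) hsHat
    have isoSC : IsIso (M.map (homOfLE hsc)) := hdet.2 s c hsc hEq
    set j0 : ObjectProperty.FullSubcategory (fun d : C => d ∈ V ∧ d ≤ c) := ⟨s, hsV, hsc⟩ with hj0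
    refine ⟨⟨inv (M.map (homOfLE hsc)) ≫ colimit.ι G j0, ?_, ?_⟩⟩
    · -- μ ≫ ν = 𝟙
      apply colimit.hom_ext
      rintro ⟨d, hdV, hdc⟩
      have hιμ : colimit.ι G ⟨d, hdV, hdc⟩ ≫ muMap R C M V c = M.map (homOfLE hdc) := by
        exact colimit.ι_desc _ _
      rw [← Category.assoc, ← Category.assoc, hιμ, Category.comp_id, Category.assoc]
      -- find s' ≤ d with iso
      have hdne : (S ∩ Set.Iic d).Nonempty := by
        obtain ⟨u, huHat, hud⟩ := hat_ge C hdV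
        obtain ⟨u', hu'S, hu'u⟩ := hat_ge C huHat
        exact ⟨u', hu'S, le_trans hu'u hud⟩
      obtain ⟨s', hs'Hat, hs'd, hEq'⟩ := exists_sharp C hmub hS hdne
      have iso1 : IsIso (M.map (homOfLE hs'd)) := hdet.2 s' d hs'd hEq'
      -- find e : mub of {s', s}, below c
      have hT2fin : ({s', s} : Set C).Finite := (Set.finite_singleton s).insert s'
      have hT2ne : ({s', s} : Set C).Nonempty := ⟨s', Set.mem_insert _ _⟩
      have hcub : c ∈ upperBounds ({s', s} : Set C) := by
        rintro x hx
        rcases hx with rfl | hx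
        · exact le_trans hs'd hdc
        · rw [Set.mem_singleton_iff] at hx; subst hx; exact hsc
      obtain ⟨e, heMub, hec⟩ := hmub _ hT2fin hT2ne c hcub
      have heV : e ∈ V := by
        refine ⟨{s', s}, ?_, hT2ne, heMub⟩
        rintro x hx
        rcases hx with rfl | hx
        · exact hs'Hat
        · rw [Set.mem_singleton_iff] at hx; subst hx; exact hsHat
      have hs'e : s' ≤ e := heMub.1 (Set.mem_insert _ _)
      have hse : s ≤ e := heMub.1 (by simp)
      have hEqe : S ∩ Set.Iic s = S ∩ Set.Iic e := by
        apply Set.Subset.antisymm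
        · rintro x ⟨hxS, hxs⟩
          exact ⟨hxS, le_trans hxs hse⟩
        · rintro x ⟨hxS, hxe⟩
          have : x ∈ S ∩ Set.Iic c := ⟨hxS, le_trans hxe hec⟩
          rw [← hEq] at this
          exact this
      have iso2 : IsIso (M.map (homOfLE hse)) := hdet.2 s e hse hEqe
      -- cocone relations
      have hs'c : s' ≤ c := le_trans hs'd hdc
      set js' : ObjectProperty.FullSubcategory (fun x : C => x ∈ V ∧ x ≤ c) :=
        ⟨s', subset_hat C (hatSet C S) hs'Hat, hs'c⟩ with hjs'
      set je : ObjectProperty.FullSubcategory (fun x : C => x ∈ V ∧ x ≤ c) := ⟨e, heV, hec⟩ with hje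
      have w1 : M.map (homOfLE hs'd) ≫ colimit.ι G ⟨d, hdV, hdc⟩ = colimit.ι G js' :=
        colimit.w G (show js' ⟶ ⟨d, hdV, hdc⟩ from ObjectProperty.homMk (homOfLE hs'd))
      have w2 : M.map (homOfLE hs'e) ≫ colimit.ι G je = colimit.ι G js' :=
        colimit.w G (show js' ⟶ je from ObjectProperty.homMk (homOfLE hs'e))
      have w3 : M.map (homOfLE hse) ≫ colimit.ι G je = colimit.ι G j0 :=
        colimit.w G (show j0 ⟶ je from ObjectProperty.homMk (homOfLE hse))
      have w1' : colimit.ι G ⟨d, hdV, hdc⟩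
          = inv (M.map (homOfLE hs'd)) ≫ colimit.ι G js' := by
        rw [IsIso.eq_inv_comp]; exact w1
      have h3 : M.map (homOfLE hs'd) ≫ M.map (homOfLE hdc) = M.map (homOfLE hs'c) := by
        rw [← M.map_comp, homOfLE_comp]
      have h2 : M.map (homOfLE hs'e) ≫ M.map (homOfLE hec) = M.map (homOfLE hs'c) := by
        rw [← M.map_comp, homOfLE_comp]
      have h1 : M.map (homOfLE hse) ≫ M.map (homOfLE hec) = M.map (homOfLE hsc) := by
        rw [← M.map_comp, homOfLE_comp]
      have h4 : M.map (homOfLE hec) ≫ inv (M.map (homOfLE hsc)) = inv (M.map (homOfLE hse)) := by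
        rw [← cancel_epi (M.map (homOfLE hse)), ← Category.assoc, h1,
          IsIso.hom_inv_id, IsIso.hom_inv_id]
      have key : ((M.map (homOfLE hdc) ≫ inv (M.map (homOfLE hsc))) ≫ M.map (homOfLE hse))
          = inv (M.map (homOfLE hs'd)) ≫ M.map (homOfLE hs'e) := by
        rw [IsIso.eq_inv_comp]
        simp only [← Category.assoc]
        rw [h3, ← h2]
        simp only [Category.assoc]
        rw [reassoc_of% h4]
        simp
      rw [← w3, w1', ← w2]
      simp only [← Category.assoc]
      rw [key]
    · -- ν ≫ μ = 𝟙
      have : colimit.ι G j0 ≫ muMap R C M V c = M.map (homOfLE hsc) := by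
        exact colimit.ι_desc _ _
      rw [Category.assoc, this, IsIso.inv_hom_id]
  · -- empty case: both sides are zero
    have hJempty : ∀ j : ObjectProperty.FullSubcategory (fun d : C => d ∈ V ∧ d ≤ c), False := by
      rintro ⟨d, hdV, hdc⟩
      obtain ⟨u, huHat, hud⟩ := hat_ge C hdV
      obtain ⟨u', hu'S, hu'u⟩ := hat_ge C huHat
      exact hne ⟨u', hu'S, le_trans (le_trans hu'u hud) hdc⟩
    have hzc : IsZero (M.obj c) := by
      by_contra h
      obtain ⟨u, huS, huc⟩ := hdet.1 h
      exact hne ⟨u, huS, huc⟩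
    have hzcolim : IsZero (colimit G) := by
      rw [IsZero.iff_id_eq_zero]
      exact colimit.hom_ext (fun j => (hJempty j).elim)
    exact ⟨⟨0, hzcolim.eq_of_src _ _, hzc.eq_of_src _ _⟩⟩

end Persist
end
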